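/- Let T be a tree with positive edge weights and no degree-2 vertices, and let u, v be leaves forming a cherry with mid-point w. Then z(u,v) = ℓ(w), where z(u,v) := d(u,v) + Σ_{x ∈ L(T)} d(x,p) for the u-v-path p and ℓ(w) := Σ_{x ∈ L(T)} d(x,w). -/
import Mathlib


open SimpleGraph Finset

noncomputable section

variable {V : Type*}

/-- The weight of a walk: sum of the weights of its edges. -/
def walkWeight {G : SimpleGraph V} (w : Sym2 V → ℝ) {x y : V} (p : G.Walk x y) : ℝ :=
  (p.edges.map w).sum

/-- The unique path between two vertices of a tree. -/
noncomputable def tpath {G : SimpleGraph V} (hT : G.IsTree) (x y : V) : G.Walk x y :=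
  (hT.existsUnique_path x y).choose

/-- The weighted distance between two vertices of a tree: the weight of the unique path. -/
noncomputable def tdist {G : SimpleGraph V} (hT : G.IsTree) (w : Sym2 V → ℝ) (x y : V) : ℝ :=
  walkWeight w (tpath hT x y)

/-- The distance from a vertex `x` to a path `p`: the minimum distance from `x`
to a vertex on `p`. -/
noncomputable def distToPath {G : SimpleGraph V} (hT : G.IsTree) (w : Sym2 V → ℝ)
    (x : V) {a b : V} (p : G.Walk a b) : ℝ :=
  sInf {r | ∃ y ∈ p.support, r = tdist hT w x y}

/-- The set of leaves of a graph. -/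
def leaves (G : SimpleGraph V) [Fintype V] [DecidableRel G.Adj] : Finset V :=
  Finset.univ.filter (fun v => G.degree v = 1)

/-- The leaf-status of a vertex: the sum of its distances to all leaves. -/
noncomputable def leafStatus {G : SimpleGraph V} [Fintype V] [DecidableRel G.Adj]
    (hT : G.IsTree) (w : Sym2 V → ℝ) (u : V) : ℝ :=
  ∑ x ∈ leaves G, tdist hT w u x

/-- The leaf-status of a path: the sum of the distances of all leaves to the path. -/
noncomputable def pathLeafStatus {G : SimpleGraph V} [Fintype V] [DecidableRel G.Adj]
    (hT : G.IsTree) (w : Sym2 V → ℝ) {a b : V} (p : G.Walk a b) : ℝ :=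
  ∑ x ∈ leaves G, distToPath hT w x p

/-- `Lside hT w u v` is the set `L^{uv}_u` of leaves strictly closer to `u` than to `v`. -/
noncomputable def Lside {G : SimpleGraph V} [Fintype V] [DecidableRel G.Adj]
    (hT : G.IsTree) (w : Sym2 V → ℝ) (u v : V) : Finset V :=
  (leaves G).filter (fun x => tdist hT w x u < tdist hT w x v)

lemma tpath_isPath {G : SimpleGraph V} (hT : G.IsTree) (x y : V) : (tpath hT x y).IsPath :=
  (hT.existsUnique_path x y).choose_spec.1

lemma tpath_unique {G : SimpleGraph V} (hT : G.IsTree) {x y : V} {P : G.Walk x y}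
    (hP : P.IsPath) : P = tpath hT x y :=
  (hT.existsUnique_path x y).choose_spec.2 P hP

lemma tdist_eq_of_isPath {G : SimpleGraph V} (hT : G.IsTree) (w : Sym2 V → ℝ) {x y : V}
    {P : G.Walk x y} (hP : P.IsPath) : tdist hT w x y = walkWeight w P := by
  rw [tdist, ← tpath_unique hT hP]

lemma tdist_self {G : SimpleGraph V} (hT : G.IsTree) (w : Sym2 V → ℝ) (x : V) :
    tdist hT w x x = 0 := by
  rw [tdist_eq_of_isPath hT w (Walk.IsPath.nil (u := x))]
  simp [walkWeight]

lemma tdist_comm {G : SimpleGraph V} (hT : G.IsTree) (w : Sym2 V → ℝ) (x y : V) :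
    tdist hT w x y = tdist hT w y x := by
  rw [tdist_eq_of_isPath hT w ((tpath_isPath hT y x).reverse)]
  simp [walkWeight, Walk.edges_reverse, tdist, List.sum_reverse]

lemma tdist_nonneg {G : SimpleGraph V} (hT : G.IsTree) {w : Sym2 V → ℝ}
    (hw : ∀ e ∈ G.edgeSet, 0 < w e) (x y : V) : 0 ≤ tdist hT w x y := by
  apply List.sum_nonneg
  intro r hr
  simp only [List.mem_map] at hr
  obtain ⟨e, he, rfl⟩ := hr
  exact le_of_lt (hw e ((tpath hT x y).edges_subset_edgeSet he))

lemma path_from_leaf {G : SimpleGraph V} [Fintype V] [DecidableRel G.Adj]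
    {u m x : V} {P : G.Walk u x} (hP : P.IsPath) (hne : u ≠ x)
    (hdeg1 : G.degree u = 1) (hum : G.Adj u m) :
    ∃ q : G.Walk m x, q.IsPath ∧ P = Walk.cons hum q := by
  cases P with
  | nil => exact absurd rfl hne
  | @cons _ t _ h q =>
    have ht : t = m := by
      obtain ⟨a, ha⟩ := Finset.card_eq_one.mp hdeg1
      have h1 : t ∈ G.neighborFinset u := by simpa using h
      have h2 : m ∈ G.neighborFinset u := by simpa using hum
      rw [ha, Finset.mem_singleton] at h1 h2
      rw [h1, h2]
    subst ht
    exact ⟨q, ((Walk.cons_isPath_iff _ _).mp hP).1, rfl⟩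

lemma tdist_leaf {G : SimpleGraph V} [Fintype V] [DecidableRel G.Adj]
    (hT : G.IsTree) (w : Sym2 V → ℝ) {u m x : V} (hne : u ≠ x)
    (hdeg1 : G.degree u = 1) (hum : G.Adj u m) :
    tdist hT w u x = w s(u, m) + tdist hT w m x := by
  obtain ⟨q, hq, hPq⟩ := path_from_leaf (tpath_isPath hT u x) hne hdeg1 hum
  rw [tdist, hPq, walkWeight, Walk.edges_cons, List.map_cons, List.sum_cons,
    tdist_eq_of_isPath hT w hq]
  rfl

/-- if leaves `u, v` form a cherry with mid-point `m`, then
`z(u,v) = ℓ(m)`. -/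
theorem stmt12 {V : Type*} [Fintype V] {G : SimpleGraph V} [DecidableRel G.Adj]
    (hT : G.IsTree) (w : Sym2 V → ℝ) (hw : ∀ e ∈ G.edgeSet, 0 < w e)
    (hdeg : ∀ x : V, G.degree x ≠ 2)
    (u v m : V) (hu : u ∈ leaves G) (hv : v ∈ leaves G) (huv : u ≠ v)
    (hum : G.Adj u m) (hvm : G.Adj v m)
    (p : G.Walk u v) (hp : p.IsPath) :
    tdist hT w u v + pathLeafStatus hT w p = leafStatus hT w m := by
  classical
  have hdu : G.degree u = 1 := (Finset.mem_filter.mp hu).2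
  have hdv : G.degree v = 1 := (Finset.mem_filter.mp hv).2
  have hum_ne : u ≠ m := hum.ne
  have hvm_ne : v ≠ m := hvm.ne
  -- the path p is u - m - v
  have hP0 : (Walk.cons hum (Walk.cons hvm.symm Walk.nil) : G.Walk u v).IsPath := by
    simp [Walk.cons_isPath_iff, hum_ne, huv, Ne.symm hvm_ne]
  have hpP0 : p = Walk.cons hum (Walk.cons hvm.symm Walk.nil) :=
    (tpath_unique hT hp).trans (tpath_unique hT hP0).symm
  have hsupp : p.support = [u, m, v] := by rw [hpP0]; rfl
  have hbdd : ∀ x : V, BddBelow {r | ∃ y ∈ p.support, r = tdist hT w x y} := by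
    intro x
    exact ⟨0, fun r hr => by
      obtain ⟨y, _, rfl⟩ := hr; exact tdist_nonneg hT hw x y⟩
  have hmemS : ∀ x y : V, y ∈ p.support →
      tdist hT w x y ∈ {r | ∃ y ∈ p.support, r = tdist hT w x y} :=
    fun x y hy => ⟨y, hy, rfl⟩
  have hupos : 0 < w s(u, m) := hw _ hum
  have hvpos : 0 < w s(v, m) := hw _ hvm
  -- distance of the endpoints to the path is 0
  have hdu0 : distToPath hT w u p = 0 := by
    refine le_antisymm ?_ ?_
    · have := csInf_le (hbdd u) (hmemS u u (by rw [hsupp]; simp))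
      rwa [tdist_self] at this
    · refine le_csInf ⟨tdist hT w u u, hmemS u u (by rw [hsupp]; simp)⟩ ?_
      rintro r ⟨y, _, rfl⟩
      exact tdist_nonneg hT hw u y
  have hdv0 : distToPath hT w v p = 0 := by
    refine le_antisymm ?_ ?_
    · have := csInf_le (hbdd v) (hmemS v v (by rw [hsupp]; simp))
      rwa [tdist_self] at this
    · refine le_csInf ⟨tdist hT w v v, hmemS v v (by rw [hsupp]; simp)⟩ ?_
      rintro r ⟨y, _, rfl⟩
      exact tdist_nonneg hT hw v y
  -- generic leaf distances
  have hgen : ∀ x : V, x ≠ u → x ≠ v → distToPath hT w x p = tdist hT w x m := by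
    intro x hxu hxv
    have h1 : tdist hT w x u = tdist hT w x m + w s(u, m) := by
      rw [tdist_comm hT w x u, tdist_leaf hT w (fun h => hxu h.symm) hdu hum,
        tdist_comm hT w m x]
      ring
    have h2 : tdist hT w x v = tdist hT w x m + w s(v, m) := by
      rw [tdist_comm hT w x v, tdist_leaf hT w (fun h => hxv h.symm) hdv hvm,
        tdist_comm hT w m x]
      ring
    refine le_antisymm (csInf_le (hbdd x) (hmemS x m (by rw [hsupp]; simp))) ?_
    refine le_csInf ⟨tdist hT w x m, hmemS x m (by rw [hsupp]; simp)⟩ ?_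
    rintro r ⟨y, hy, rfl⟩
    rw [hsupp] at hy
    simp only [List.mem_cons, List.mem_singleton, List.not_mem_nil, or_false] at hy
    rcases hy with rfl | rfl | rfl
    · rw [h1]; linarith
    · rfl
    · rw [h2]; linarith
  -- splitting sums over leaves
  have hset : leaves G = insert u (insert v ((leaves G) \ {u, v})) := by
    ext a
    simp only [Finset.mem_insert, Finset.mem_sdiff, Finset.mem_singleton]
    constructor
    · intro h
      by_cases h1 : a = u
      · exact Or.inl h1
      · by_cases h2 : a = v
        · exact Or.inr (Or.inl h2)
        · exact Or.inr (Or.inr ⟨h, by simp [h1, h2]⟩)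
    · rintro (rfl | rfl | ⟨h, _⟩) <;> assumption
  have hnu : u ∉ insert v ((leaves G) \ {u, v}) := by simp [huv]
  have hnv : v ∉ (leaves G) \ {u, v} := by simp
  have hsplit : ∀ f : V → ℝ,
      ∑ x ∈ leaves G, f x = f u + f v + ∑ x ∈ (leaves G) \ {u, v}, f x := by
    intro f
    conv_lhs => rw [hset]
    rw [Finset.sum_insert hnu, Finset.sum_insert hnv]
    ring
  -- key distances
  have hmu : tdist hT w m u = w s(u, m) := by
    rw [tdist_comm hT w m u, tdist_leaf hT w hum_ne hdu hum, tdist_self]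
    ring
  have hmv : tdist hT w m v = w s(v, m) := by
    rw [tdist_comm hT w m v, tdist_leaf hT w hvm_ne hdv hvm, tdist_self]
    ring
  have huvd : tdist hT w u v = w s(u, m) + w s(v, m) := by
    rw [tdist_leaf hT w huv hdu hum, hmv]
  rw [pathLeafStatus, leafStatus, hsplit, hsplit, hdu0, hdv0, hmu, hmv, huvd]
  have hrest : ∑ x ∈ (leaves G) \ {u, v}, distToPath hT w x p
      = ∑ x ∈ (leaves G) \ {u, v}, tdist hT w m x := by
    refine Finset.sum_congr rfl ?_
    intro x hx
    simp only [Finset.mem_sdiff, Finset.mem_insert, Finset.mem_singleton] at hx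
    rw [hgen x (fun h => hx.2 (by simp [h])) (fun h => hx.2 (by simp [h])),
      tdist_comm]
  rw [hrest]
  ring
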